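/- Along a singular arc of the first control on which the second-order coefficient vanishes, the adjoint components λ5 and λ6 are constant with explicit values. Precisely: let a < b, let x3, x4, x5, x6, x7 : [a,b] → ℝ be continuous with x3(t), x4(t), x5(t) ≥ 0 and x6(t), x7(t) > 0 on [a,b], and let λ4, λ5, λ6 : [a,b] → ℝ be absolutely continuous with λ5 and λ6 satisfying a.e. the adjoint equations λ̇5 = x6·(∂v_g/∂x5·λ̄3 + ∂v_z/∂x5·λ4 − ∂v_e/∂x5·λ5 − ∂μ/∂x5·λ6) and λ̇6 = v_g·λ̄3 + v_z·λ4 − v_e·λ5 − μ·λ6, where λ̄3 is a constant. Assume λ̄3 − b1·λ5(t) − a1·λ6(t) = 0 for all t ∈ [a,b], x4(t)·(−λ4(t) + b2·λ5(t) + a2·λ6(t)) = 0 for all t ∈ [a,b], and b1·μ̄ − a1·v̄ ≠ 0. Then λ5(t) ≡ λ̄3·μ̄/(b1·μ̄ − a1·v̄) and λ6(t) ≡ −λ̄3·v̄/(b1·μ̄ − a1·v̄) on [a,b]. -/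

import Mathlib

open MeasureTheory Set

/-- Positive constants of the bioreactor uptake kinetics. -/
structure BioParams where
  vgmax : ℝ
  vzmax : ℝ
  kg : ℝ
  kieg : ℝ
  kz : ℝ
  kiez : ℝ
  kig : ℝ
  vgmax_pos : 0 < vgmax
  vzmax_pos : 0 < vzmax
  kg_pos : 0 < kg
  kieg_pos : 0 < kieg
  kz_pos : 0 < kz
  kiez_pos : 0 < kiez
  kig_pos : 0 < kig

/-- Glucose uptake rate `v_g(x3,x5,x7)`. -/
noncomputable def vg (P : BioParams) (x3 x5 x7 : ℝ) : ℝ :=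
  P.vgmax * x3 * x7 / ((P.kg * x7 + x3) * (x7 + x5 / P.kieg))

/-- Xylose uptake rate `v_z(x3,x4,x5,x7)`. -/
noncomputable def vz (P : BioParams) (x3 x4 x5 x7 : ℝ) : ℝ :=
  P.vzmax * x4 * x7 ^ 2 /
    ((P.kz * x7 + x4) * (x7 + x3 / P.kig) * (x7 + x5 / P.kiez))

/-- Coefficients of the affine growth rate and ethanol flux:
`μ = a1 v_g + a2 v_z + μ̄`, `v_e = b1 v_g + b2 v_z + v̄`. -/
structure AffineCoeffs where
  a1 : ℝ
  a2 : ℝ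
  b1 : ℝ
  b2 : ℝ
  mubar : ℝ
  vbar : ℝ
  a1_pos : 0 < a1
  a2_pos : 0 < a2
  b1_pos : 0 < b1
  b2_pos : 0 < b2
  mubar_pos : 0 < mubar

/-- Biomass growth rate `μ`. -/
noncomputable def mu (P : BioParams) (C : AffineCoeffs) (x3 x4 x5 x7 : ℝ) : ℝ :=
  C.a1 * vg P x3 x5 x7 + C.a2 * vz P x3 x4 x5 x7 + C.mubar

/-- Ethanol flux `v_e`. -/
noncomputable def ve (P : BioParams) (C : AffineCoeffs) (x3 x4 x5 x7 : ℝ) : ℝ :=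
  C.b1 * vg P x3 x5 x7 + C.b2 * vz P x3 x4 x5 x7 + C.vbar

/-- `∂v_g/∂x3`. -/
noncomputable def dvg_dx3 (P : BioParams) (x3 x5 x7 : ℝ) : ℝ :=
  deriv (fun y => vg P y x5 x7) x3

/-- `∂v_g/∂x5`. -/
noncomputable def dvg_dx5 (P : BioParams) (x3 x5 x7 : ℝ) : ℝ :=
  deriv (fun y => vg P x3 y x7) x5

/-- `∂v_g/∂x7`. -/
noncomputable def dvg_dx7 (P : BioParams) (x3 x5 x7 : ℝ) : ℝ :=
  deriv (fun y => vg P x3 x5 y) x7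

/-- `∂v_z/∂x3`. -/
noncomputable def dvz_dx3 (P : BioParams) (x3 x4 x5 x7 : ℝ) : ℝ :=
  deriv (fun y => vz P y x4 x5 x7) x3

/-- `∂v_z/∂x4`. -/
noncomputable def dvz_dx4 (P : BioParams) (x3 x4 x5 x7 : ℝ) : ℝ :=
  deriv (fun y => vz P x3 y x5 x7) x4

/-- `∂v_z/∂x5`. -/
noncomputable def dvz_dx5 (P : BioParams) (x3 x4 x5 x7 : ℝ) : ℝ :=
  deriv (fun y => vz P x3 x4 y x7) x5

/-- `∂v_z/∂x7`. -/
noncomputable def dvz_dx7 (P : BioParams) (x3 x4 x5 x7 : ℝ) : ℝ :=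
  deriv (fun y => vz P x3 x4 x5 y) x7

/-- `∂μ/∂x3`. -/
noncomputable def dmu_dx3 (P : BioParams) (C : AffineCoeffs) (x3 x4 x5 x7 : ℝ) : ℝ :=
  deriv (fun y => mu P C y x4 x5 x7) x3

/-- `∂μ/∂x4`. -/
noncomputable def dmu_dx4 (P : BioParams) (C : AffineCoeffs) (x3 x4 x5 x7 : ℝ) : ℝ :=
  deriv (fun y => mu P C x3 y x5 x7) x4

/-- `∂μ/∂x5`. -/
noncomputable def dmu_dx5 (P : BioParams) (C : AffineCoeffs) (x3 x4 x5 x7 : ℝ) : ℝ :=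
  deriv (fun y => mu P C x3 x4 y x7) x5

/-- `∂μ/∂x7`. -/
noncomputable def dmu_dx7 (P : BioParams) (C : AffineCoeffs) (x3 x4 x5 x7 : ℝ) : ℝ :=
  deriv (fun y => mu P C x3 x4 x5 y) x7

/-- `∂v_e/∂x3`. -/
noncomputable def dve_dx3 (P : BioParams) (C : AffineCoeffs) (x3 x4 x5 x7 : ℝ) : ℝ :=
  deriv (fun y => ve P C y x4 x5 x7) x3

/-- `∂v_e/∂x4`. -/
noncomputable def dve_dx4 (P : BioParams) (C : AffineCoeffs) (x3 x4 x5 x7 : ℝ) : ℝ :=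
  deriv (fun y => ve P C x3 y x5 x7) x4

/-- `∂v_e/∂x5`. -/
noncomputable def dve_dx5 (P : BioParams) (C : AffineCoeffs) (x3 x4 x5 x7 : ℝ) : ℝ :=
  deriv (fun y => ve P C x3 x4 y x7) x5

/-- `∂v_e/∂x7`. -/
noncomputable def dve_dx7 (P : BioParams) (C : AffineCoeffs) (x3 x4 x5 x7 : ℝ) : ℝ :=
  deriv (fun y => ve P C x3 x4 x5 y) x7

/-- `x` is absolutely continuous on `[a,b]` and satisfies `ẋ = f` a.e. there,
expressed in integral form. -/
def SolvesODE (x f : ℝ → ℝ) (a b : ℝ) : Prop :=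
  IntervalIntegrable f MeasureTheory.volume a b ∧
    ∀ t ∈ Set.Icc a b, x t = x a + ∫ s in a..t, f s

lemma vg_diff (P : BioParams) {x3 x5 x7 : ℝ} (h3 : 0 ≤ x3) (h5 : 0 ≤ x5) (h7 : 0 < x7) :
    DifferentiableAt ℝ (fun y => vg P x3 y x7) x5 := by
  have hkg := P.kg_pos; have hkieg := P.kieg_pos
  unfold vg
  exact DifferentiableAt.div (differentiableAt_const _) (by fun_prop) (by positivity)

lemma vz_diff (P : BioParams) {x3 x4 x5 x7 : ℝ} (h3 : 0 ≤ x3) (h4 : 0 ≤ x4)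
    (h5 : 0 ≤ x5) (h7 : 0 < x7) :
    DifferentiableAt ℝ (fun y => vz P x3 x4 y x7) x5 := by
  have hkz := P.kz_pos; have hkig := P.kig_pos; have hkiez := P.kiez_pos
  unfold vz
  exact DifferentiableAt.div (differentiableAt_const _) (by fun_prop) (by positivity)

lemma dve_dx5_eq (P : BioParams) (C : AffineCoeffs) {x3 x4 x5 x7 : ℝ}
    (h3 : 0 ≤ x3) (h4 : 0 ≤ x4) (h5 : 0 ≤ x5) (h7 : 0 < x7) :
    dve_dx5 P C x3 x4 x5 x7 =
      C.b1 * dvg_dx5 P x3 x5 x7 + C.b2 * dvz_dx5 P x3 x4 x5 x7 := by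
  have hg := vg_diff P h3 h5 h7
  have hz := vz_diff P h3 h4 h5 h7
  simp only [dve_dx5, ve, dvg_dx5, dvz_dx5]
  rw [deriv_add_const, deriv_fun_add (hg.const_mul _) (hz.const_mul _),
    deriv_const_mul _ hg, deriv_const_mul _ hz]

lemma dmu_dx5_eq (P : BioParams) (C : AffineCoeffs) {x3 x4 x5 x7 : ℝ}
    (h3 : 0 ≤ x3) (h4 : 0 ≤ x4) (h5 : 0 ≤ x5) (h7 : 0 < x7) :
    dmu_dx5 P C x3 x4 x5 x7 =
      C.a1 * dvg_dx5 P x3 x5 x7 + C.a2 * dvz_dx5 P x3 x4 x5 x7 := by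
  have hg := vg_diff P h3 h5 h7
  have hz := vz_diff P h3 h4 h5 h7
  simp only [dmu_dx5, mu, dvg_dx5, dvz_dx5]
  rw [deriv_add_const, deriv_fun_add (hg.const_mul _) (hz.const_mul _),
    deriv_const_mul _ hg, deriv_const_mul _ hz]

lemma dvz_dx5_zero (P : BioParams) (x3 x5 x7 : ℝ) :
    dvz_dx5 P x3 0 x5 x7 = 0 := by
  simp [dvz_dx5, vz]

/-- along a singular arc of the first control on which the second-order
coefficient vanishes, i.e. where `λ̄3 - b1 λ5 - a1 λ6 ≡ 0` and
`x4 (-λ4 + b2 λ5 + a2 λ6) ≡ 0`, the adjoint components `λ5, λ6` are constant with the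
explicit values `λ5 ≡ λ̄3 μ̄/(b1 μ̄ - a1 v̄)` and `λ6 ≡ -λ̄3 v̄/(b1 μ̄ - a1 v̄)`. -/
theorem stmt6 (P : BioParams) (C : AffineCoeffs) (lam3 : ℝ)
    (a b : ℝ) (hab : a < b)
    (x3 x4 x5 x6 x7 : ℝ → ℝ)
    (hc3 : ContinuousOn x3 (Set.Icc a b)) (hc4 : ContinuousOn x4 (Set.Icc a b))
    (hc5 : ContinuousOn x5 (Set.Icc a b)) (hc6 : ContinuousOn x6 (Set.Icc a b))
    (hc7 : ContinuousOn x7 (Set.Icc a b))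
    (h3 : ∀ t ∈ Set.Icc a b, 0 ≤ x3 t) (h4 : ∀ t ∈ Set.Icc a b, 0 ≤ x4 t)
    (h5 : ∀ t ∈ Set.Icc a b, 0 ≤ x5 t)
    (h6 : ∀ t ∈ Set.Icc a b, 0 < x6 t) (h7 : ∀ t ∈ Set.Icc a b, 0 < x7 t)
    (l4 l5 l6 : ℝ → ℝ)
    -- `λ4` is absolutely continuous on `[a,b]`
    (hl4ac : ∃ g : ℝ → ℝ, IntervalIntegrable g MeasureTheory.volume a b ∧
      ∀ t ∈ Set.Icc a b, l4 t = l4 a + ∫ s in a..t, g s)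
    -- `λ5` satisfies its adjoint equation a.e. on `[a,b]`
    (hl5 : SolvesODE l5
      (fun s => x6 s * (dvg_dx5 P (x3 s) (x5 s) (x7 s) * lam3 +
          dvz_dx5 P (x3 s) (x4 s) (x5 s) (x7 s) * l4 s -
          dve_dx5 P C (x3 s) (x4 s) (x5 s) (x7 s) * l5 s -
          dmu_dx5 P C (x3 s) (x4 s) (x5 s) (x7 s) * l6 s)) a b)
    -- `λ6` satisfies its adjoint equation a.e. on `[a,b]`
    (hl6 : SolvesODE l6
      (fun s => vg P (x3 s) (x5 s) (x7 s) * lam3 +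
          vz P (x3 s) (x4 s) (x5 s) (x7 s) * l4 s -
          ve P C (x3 s) (x4 s) (x5 s) (x7 s) * l5 s -
          mu P C (x3 s) (x4 s) (x5 s) (x7 s) * l6 s) a b)
    (hA : ∀ t ∈ Set.Icc a b, lam3 - C.b1 * l5 t - C.a1 * l6 t = 0)
    (hB : ∀ t ∈ Set.Icc a b, x4 t * (-l4 t + C.b2 * l5 t + C.a2 * l6 t) = 0)
    (hD : C.b1 * C.mubar - C.a1 * C.vbar ≠ 0) :
    ∀ t ∈ Set.Icc a b,
      l5 t = lam3 * C.mubar / (C.b1 * C.mubar - C.a1 * C.vbar) ∧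
            l6 t = -(lam3 * C.vbar) / (C.b1 * C.mubar - C.a1 * C.vbar) := by
  have haa : a ∈ Set.Icc a b := ⟨le_refl a, hab.le⟩
  have hbb : b ∈ Set.Icc a b := ⟨hab.le, le_refl b⟩
  -- Step 1: the RHS of the λ5 adjoint equation vanishes identically on [a,b]
  have key5 : ∀ s ∈ Set.Icc a b,
      x6 s * (dvg_dx5 P (x3 s) (x5 s) (x7 s) * lam3 +
          dvz_dx5 P (x3 s) (x4 s) (x5 s) (x7 s) * l4 s -
          dve_dx5 P C (x3 s) (x4 s) (x5 s) (x7 s) * l5 s -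
          dmu_dx5 P C (x3 s) (x4 s) (x5 s) (x7 s) * l6 s) = 0 := by
    intro s hs
    have hAs := hA s hs
    have hBs := hB s hs
    rw [dve_dx5_eq P C (h3 s hs) (h4 s hs) (h5 s hs) (h7 s hs),
        dmu_dx5_eq P C (h3 s hs) (h4 s hs) (h5 s hs) (h7 s hs)]
    rcases mul_eq_zero.1 hBs with h0 | h0
    · rw [h0, dvz_dx5_zero]
      linear_combination (x6 s * dvg_dx5 P (x3 s) (x5 s) (x7 s)) * hAs
    · linear_combination (x6 s * dvg_dx5 P (x3 s) (x5 s) (x7 s)) * hAs -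
        (x6 s * dvz_dx5 P (x3 s) (x4 s) (x5 s) (x7 s)) * h0
  -- Step 2: λ5 is constant
  have hl5c : ∀ t ∈ Set.Icc a b, l5 t = l5 a := by
    intro t ht
    rw [hl5.2 t ht]
    have hz : (∫ s in a..t,
        x6 s * (dvg_dx5 P (x3 s) (x5 s) (x7 s) * lam3 +
          dvz_dx5 P (x3 s) (x4 s) (x5 s) (x7 s) * l4 s -
          dve_dx5 P C (x3 s) (x4 s) (x5 s) (x7 s) * l5 s -
          dmu_dx5 P C (x3 s) (x4 s) (x5 s) (x7 s) * l6 s)) = 0 := by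
      rw [show (0 : ℝ) = ∫ s in a..t, (0 : ℝ) by simp]
      apply intervalIntegral.integral_congr
      intro s hs
      rw [Set.uIcc_of_le ht.1] at hs
      exact key5 s ⟨hs.1, hs.2.trans ht.2⟩
    rw [hz, add_zero]
  -- Step 3: λ6 is constant
  have ha1 : C.a1 ≠ 0 := ne_of_gt C.a1_pos
  have hl6c : ∀ t ∈ Set.Icc a b, l6 t = l6 a := by
    intro t ht
    have h1 := hA t ht
    have h2 := hA a haa
    rw [hl5c t ht] at h1
    apply mul_left_cancel₀ ha1
    linarith
  -- Step 4: the RHS of the λ6 equation equals a constant on [a,b]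
  have key6 : ∀ s ∈ Set.Icc a b,
      vg P (x3 s) (x5 s) (x7 s) * lam3 +
        vz P (x3 s) (x4 s) (x5 s) (x7 s) * l4 s -
        ve P C (x3 s) (x4 s) (x5 s) (x7 s) * l5 s -
        mu P C (x3 s) (x4 s) (x5 s) (x7 s) * l6 s
        = -(C.vbar * l5 a) - C.mubar * l6 a := by
    intro s hs
    have hBs := hB s hs
    have hAa := hA a haa
    rw [hl5c s hs, hl6c s hs] at hBs ⊢
    simp only [ve, mu]
    rcases mul_eq_zero.1 hBs with h0 | h0
    · rw [h0]
      simp only [vz, mul_zero, zero_mul, zero_div]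
      linear_combination (vg P (x3 s) (x5 s) (x7 s)) * hAa
    · linear_combination (vg P (x3 s) (x5 s) (x7 s)) * hAa -
        (vz P (x3 s) (x4 s) (x5 s) (x7 s)) * h0
  -- Step 5: the constant must be zero
  have e1 : C.vbar * l5 a + C.mubar * l6 a = 0 := by
    have hb6 := hl6.2 b hbb
    have hz : (∫ s in a..b,
        (vg P (x3 s) (x5 s) (x7 s) * lam3 +
          vz P (x3 s) (x4 s) (x5 s) (x7 s) * l4 s -
          ve P C (x3 s) (x4 s) (x5 s) (x7 s) * l5 s -
          mu P C (x3 s) (x4 s) (x5 s) (x7 s) * l6 s))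
        = (b - a) * (-(C.vbar * l5 a) - C.mubar * l6 a) := by
      rw [show (∫ s in a..b,
          (vg P (x3 s) (x5 s) (x7 s) * lam3 +
            vz P (x3 s) (x4 s) (x5 s) (x7 s) * l4 s -
            ve P C (x3 s) (x4 s) (x5 s) (x7 s) * l5 s -
            mu P C (x3 s) (x4 s) (x5 s) (x7 s) * l6 s))
          = ∫ s in a..b, (-(C.vbar * l5 a) - C.mubar * l6 a) from
        intervalIntegral.integral_congr (fun s hs => by
          rw [Set.uIcc_of_le hab.le] at hs
          exact key6 s hs)]
      simp [smul_eq_mul]; ring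
    rw [hz, hl6c b hbb] at hb6
    have hba : b - a ≠ 0 := sub_ne_zero.2 (ne_of_gt hab)
    have : (b - a) * (-(C.vbar * l5 a) - C.mubar * l6 a) = 0 := by linarith
    have := (mul_eq_zero.1 this).resolve_left hba
    linarith
  have e2 := hA a haa
  -- Step 6: solve the linear system
  intro t ht
  rw [hl5c t ht, hl6c t ht]
  constructor
  · rw [eq_div_iff hD]
    linear_combination (-C.mubar) * e2 - C.a1 * e1
  · rw [eq_div_iff hD]
    linear_combination C.vbar * e2 + C.b1 * e1
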